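/- Let L be a real normal matrix with eigenvalue 0 of multiplicity 1 and all other eigenvalues having positive real part. Let f(λ) = |λ|²/(2 Re λ) and let θ maximize f among nonzero eigenvalues. If Re(λ) ≥ Re(θ) for all eigenvalues λ ∉ {0, θ}, then for any real α ≤ −f(θ), the second largest singular value of αI + L is |α + θ|; that is, |α + θ| ≥ |α + λ| for every eigenvalue λ ∉ {0, θ}. -/

import Mathlib

open Matrix

def mapC {n : ℕ} (L : Matrix (Fin n) (Fin n) ℝ) : Matrix (Fin n) (Fin n) ℂ :=
  L.map (fun x : ℝ => (x : ℂ))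

noncomputable def fval (lam : ℂ) : ℝ := ‖lam‖^2 / (2 * lam.re)

theorem stmt12 {n : ℕ} (L : Matrix (Fin n) (Fin n) ℝ)
    (hnormal : L * Lᵀ = Lᵀ * L)
    (h0simple : (mapC L).charpoly.rootMultiplicity 0 = 1)
    (hpos : ∀ lam ∈ spectrum ℂ (mapC L), lam ≠ 0 → 0 < lam.re)
    (θ : ℂ) (hθmem : θ ∈ spectrum ℂ (mapC L)) (hθne : θ ≠ 0)
    (hθmax : ∀ lam ∈ spectrum ℂ (mapC L), lam ≠ 0 → fval lam ≤ fval θ)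
    (hre : ∀ lam ∈ spectrum ℂ (mapC L), lam ≠ 0 → lam ≠ θ → θ.re ≤ lam.re)
    (α : ℝ) (hα : α ≤ -fval θ) :
    ∀ lam ∈ spectrum ℂ (mapC L), lam ≠ 0 → lam ≠ θ →
      ‖(α : ℂ) + lam‖ ≤ ‖(α : ℂ) + θ‖ := by
  intro lam hmem hne hneθ
  have h1 : 0 < lam.re := hpos lam hmem hne
  have h2 : 0 < θ.re := hpos θ hθmem hθne
  have h3 : fval lam ≤ fval θ := hθmax lam hmem hne
  have h4 : θ.re ≤ lam.re := hre lam hmem hne hneθ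
  unfold fval at h3 hα
  simp only [Complex.sq_norm, Complex.normSq_apply] at h3 hα
  have h3' : (lam.re * lam.re + lam.im * lam.im) * (2 * θ.re)
      ≤ (θ.re * θ.re + θ.im * θ.im) * (2 * lam.re) :=
    (div_le_div_iff₀ (by linarith) (by linarith)).mp h3
  have hα' : α * (2 * θ.re) ≤ -(θ.re * θ.re + θ.im * θ.im) := by
    have := (le_div_iff₀ (by linarith : (0:ℝ) < 2 * θ.re)).mp
      (by rw [neg_div]; exact hα : α ≤ -(θ.re * θ.re + θ.im * θ.im) / (2 * θ.re))
    linarith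
  have key : ‖(α:ℂ) + lam‖^2 ≤ ‖(α:ℂ) + θ‖^2 := by
    rw [Complex.sq_norm, Complex.sq_norm, Complex.normSq_apply, Complex.normSq_apply]
    simp only [Complex.add_re, Complex.add_im, Complex.ofReal_re, Complex.ofReal_im]
    nlinarith [mul_nonneg (by linarith : (0:ℝ) ≤ lam.re - θ.re)
      (by nlinarith : (0:ℝ) ≤ -(2 * α * θ.re) - (θ.re * θ.re + θ.im * θ.im)), h1, h2]
  exact (pow_le_pow_iff_left₀ (norm_nonneg _) (norm_nonneg _) two_ne_zero).mp key
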